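/- arXiv:1311.7446 — 7 statements merged into one kernel-verified Lean document; each statement's English description precedes it below -/
import Mathlib

section
/- If G is a finite group generated by two elements a and b such that the commutator [a,b] = a b a⁻¹ b⁻¹ has order 2, then the order of G is divisible by 4. -/
open scoped commutatorElement

/-- If `G` is a finite group generated by two elements `a` and `b` such that the
commutator `⁅a, b⁆ = a * b * a⁻¹ * b⁻¹` has order 2, then `4` divides the order of `G`. -/
theorem stmt_0 {G : Type*} [Group G] [Finite G] (a b : G)
    (hgen : Subgroup.closure ({a, b} : Set G) = ⊤)
    (hcomm : orderOf ⁅a, b⁆ = 2) :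
    4 ∣ Nat.card G := by
  classical
  have : Fintype G := Fintype.ofFinite G
  set c : G := ⁅a, b⁆ with hc
  have hc1 : c ≠ 1 := by
    intro h
    rw [h, orderOf_one] at hcomm
    norm_num at hcomm
  set f : G →* Equiv.Perm G := MulAction.toPermHom G G with hf
  have hfinj : Function.Injective f := MulAction.toPerm_injective
  set σ : Equiv.Perm G := f c with hσ
  -- sign of a commutator is 1
  have hsign : Equiv.Perm.sign σ = 1 := by
    have : σ = ⁅f a, f b⁆ := by
      simp [hσ, hc, commutatorElement_def, map_mul, map_inv]
    rw [this, map_commutatorElement]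
    exact commutatorElement_eq_one_iff_commute.mpr (Commute.all _ _)
  -- order of σ is 2
  have hordσ : orderOf σ = 2 := by
    rw [hσ, orderOf_injective f hfinj, hcomm]
  -- σ has no fixed points
  have hsupp : σ.support = Finset.univ := by
    ext x
    simp only [Finset.mem_univ, iff_true, Equiv.Perm.mem_support]
    intro h
    have : c * x = x := h
    exact hc1 (by simpa using mul_right_cancel (this.trans (one_mul x).symm))
  -- every cycle length is 2
  have hcyc : ∀ n ∈ σ.cycleType, n = 2 := by
    intro n hn
    have h2 : 2 ≤ n := Equiv.Perm.two_le_of_mem_cycleType hn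
    have hdvd : n ∣ 2 := by
      rw [← hordσ, ← σ.lcm_cycleType]; exact Multiset.dvd_lcm hn
    have := Nat.le_of_dvd (by norm_num) hdvd
    omega
  have hrep : σ.cycleType = Multiset.replicate (Multiset.card σ.cycleType) 2 :=
    Multiset.eq_replicate_card.mpr hcyc
  have hsum : σ.cycleType.sum = Fintype.card G := by
    rw [Equiv.Perm.sum_cycleType, hsupp, Finset.card_univ]
  have hsum2 : 2 * Multiset.card σ.cycleType = Fintype.card G := by
    rw [← hsum]; conv_rhs => rw [hrep]
    rw [Multiset.sum_replicate]; ring_nf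
  -- compute the sign via the cycle type
  have := Equiv.Perm.sign_of_cycleType σ
  rw [hsign, hsum] at this
  have heven : Even (Fintype.card G + Multiset.card σ.cycleType) := by
    by_contra hodd
    rw [Nat.not_even_iff_odd] at hodd
    rw [Odd.neg_one_pow hodd] at this
    exact (by decide : ¬ ((1 : ℤˣ) = -1)) this
  have hcard : Even (Multiset.card σ.cycleType) := by
    have hGeven : Even (Fintype.card G) := ⟨Multiset.card σ.cycleType, by omega⟩
    rcases hGeven with ⟨k, hk⟩
    rcases heven with ⟨m, hm⟩
    exact ⟨m - k, by omega⟩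
  rcases hcard with ⟨k, hk⟩
  rw [Nat.card_eq_fintype_card, ← hsum2, hk]
  exact ⟨k, by ring⟩
end

section
/- If a finite group G of order n is generated by two elements x, y with [x,y] of order 2, and m is coprime to n, then G × C_m is generated by (x, 0) and (y, 1), and the commutator of these generators has order 2. In particular, if n is tH and gcd(n,m) = 1, then n·m is tH. -/
open scoped commutatorElement

/-- If a finite group `G` of order `n` is generated by `x, y` with `⁅x, y⁆` of order 2,
and `m > 0` is coprime to `n`, then `G × C_m` (of order `n * m`) is generated by
`(x, 0)` and `(y, 1)`, and the commutator of these generators has order 2.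
In particular, if `n` is tH and `gcd (n, m) = 1`, then `n * m` is tH. -/
theorem stmt_7 {G : Type*} [Group G] [Finite G] (n m : ℕ) (hn : Nat.card G = n)
    (hm : 0 < m) (hco : Nat.Coprime n m) (x y : G)
    (hgen : Subgroup.closure ({x, y} : Set G) = ⊤) (hord : orderOf ⁅x, y⁆ = 2) :
    Nat.card (G × Multiplicative (ZMod m)) = n * m ∧
      Subgroup.closure
          ({(x, 1), (y, Multiplicative.ofAdd 1)} : Set (G × Multiplicative (ZMod m)))
        = ⊤ ∧
      orderOf ⁅((x, 1) : G × Multiplicative (ZMod m)),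
        ((y, Multiplicative.ofAdd 1) : G × Multiplicative (ZMod m))⁆ = 2 := by
  have : NeZero m := ⟨hm.ne'⟩
  set g : Multiplicative (ZMod m) := Multiplicative.ofAdd 1 with hg
  have hcardZ : Nat.card (Multiplicative (ZMod m)) = m := by
    simp [Nat.card_eq_fintype_card, ZMod.card]
  refine ⟨by simp [Nat.card_prod, hn, hcardZ], ?_, ?_⟩
  · set H := Subgroup.closure ({(x, 1), (y, g)} : Set (G × Multiplicative (ZMod m))) with hH
    have hxH : (x, (1 : Multiplicative (ZMod m))) ∈ H :=
      Subgroup.subset_closure (by left; rfl)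
    have hyH : (y, g) ∈ H := Subgroup.subset_closure (by right; rfl)
    have hyn : y ^ n = 1 := by rw [← hn]; exact pow_card_eq_one'
    have hgm : g ^ m = 1 := by
      have : orderOf g = m := by
        have := ZMod.addOrderOf_one m
        simpa [hg, orderOf_ofAdd_eq_addOrderOf] using this
      exact orderOf_dvd_iff_pow_eq_one.1 (by rw [this])
    have hgnH : ((1 : G), g ^ n) ∈ H := by
      have : ((y, g)) ^ n = (y ^ n, g ^ n) := rfl
      have h2 := H.pow_mem hyH n; rw [this, hyn] at h2; exact h2
    -- g ∈ zpowers (g^n) via Bezout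
    have hgH : ((1 : G), g) ∈ H := by
      have hb : (n : ℤ) * Nat.gcdA n m + (m : ℤ) * Nat.gcdB n m = 1 := by
        have := Nat.gcd_eq_gcd_ab n m
        rw [hco] at this; omega
      have key : (g ^ n) ^ Nat.gcdA n m = g := by
        calc (g ^ n) ^ Nat.gcdA n m = g ^ ((n : ℤ) * Nat.gcdA n m) := by
              rw [← zpow_natCast, ← zpow_mul]
          _ = g ^ ((n : ℤ) * Nat.gcdA n m) * (g ^ (m : ℤ)) ^ Nat.gcdB n m := by
              rw [zpow_natCast, hgm, one_zpow, mul_one]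
          _ = g ^ ((n : ℤ) * Nat.gcdA n m + (m : ℤ) * Nat.gcdB n m) := by
              rw [zpow_add, zpow_mul, zpow_mul]
          _ = g := by rw [hb, zpow_one]
      rw [← key]
      simpa using H.zpow_mem hgnH (Nat.gcdA n m)
    have hy1H : (y, (1 : Multiplicative (ZMod m))) ∈ H := by
      have := H.mul_mem hyH (H.inv_mem hgH)
      simpa using this
    -- all (1, b)
    have hb : ∀ b : Multiplicative (ZMod m), ((1 : G), b) ∈ H := by
      intro b
      have : b = g ^ (b.toAdd).val := by
        have : (b.toAdd.val : ZMod m) = b.toAdd := by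
          rw [ZMod.natCast_val, ZMod.cast_id]
        calc b = Multiplicative.ofAdd b.toAdd := rfl
        _ = Multiplicative.ofAdd ((b.toAdd.val : ℕ) • (1 : ZMod m)) := by
            rw [nsmul_eq_mul, mul_one, this]
        _ = g ^ (b.toAdd).val := by rw [hg, ← ofAdd_nsmul]
      rw [this]
      simpa using H.pow_mem hgH _
    -- all (a, 1)
    have ha : ∀ a : G, (a, (1 : Multiplicative (ZMod m))) ∈ H := by
      intro a
      have h1 : a ∈ Subgroup.closure ({x, y} : Set G) := hgen ▸ Subgroup.mem_top a
      have h2 : (MonoidHom.inl G (Multiplicative (ZMod m))) a ∈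
          (Subgroup.closure ({x, y} : Set G)).map (MonoidHom.inl G _) :=
        Subgroup.mem_map_of_mem _ h1
      rw [MonoidHom.map_closure] at h2
      refine Subgroup.closure_le (K := H) |>.2 ?_ h2
      rintro z ⟨w, hw, rfl⟩
      rcases hw with rfl | rfl
      · exact hxH
      · exact hy1H
    rw [eq_top_iff]
    rintro ⟨a, b⟩ -
    have : (a, b) = (a, (1 : Multiplicative (ZMod m))) * (1, b) := by simp
    rw [this]
    exact H.mul_mem (ha a) (hb b)
  · have hc : ⁅((x, 1) : G × Multiplicative (ZMod m)), ((y, g))⁆ = (⁅x, y⁆, 1) := by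
      simp [commutatorElement_def, Prod.ext_iff, mul_assoc]
    rw [hc, Prod.orderOf]
    simp [hord]
end

section
/- Let G be a finite group and U ≤ G a subgroup whose index (G:U) is coprime to |U| (a Hall subgroup). If g ∈ G with U^g ≠ U and U normalizes U^g, then the subgroup generated by U and U^g has order |U|²/|U ∩ U^g|, which is strictly larger than |U| and whose prime divisors all divide |U|; this contradicts Lagrange, so U is the unique conjugate of U fixed by U under conjugation. -/
/-- Let `U` be a Hall subgroup of a finite group `G` (its order and index are coprime).
Then the only conjugate of `U` which is normalized by `U` is `U` itself: if `U`
normalizes the conjugate `U^g` then `U^g = U`. -/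
theorem stmt_12 {G : Type*} [Group G] [Finite G] (U : Subgroup G)
    (hHall : Nat.Coprime (Nat.card U) U.index) (g : G)
    (hnorm : U ≤ Subgroup.normalizer ((U.map (MulAut.conj g).toMonoidHom : Subgroup G) : Set G)) :
    U.map (MulAut.conj g).toMonoidHom = U := by
  set V := U.map (MulAut.conj g).toMonoidHom with hVdef
  have hinj : Function.Injective (MulAut.conj g).toMonoidHom := (MulAut.conj g).injective
  have hcardV : Nat.card V = Nat.card U :=
    (Nat.card_congr (U.equivMapOfInjective _ hinj).toEquiv).symm
  set W := U ⊔ V with hWdef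
  have hUW : U ≤ W := le_sup_left
  have hVW : V ≤ W := le_sup_right
  have hWnorm : W ≤ Subgroup.normalizer (V : Set G) := sup_le hnorm Subgroup.le_normalizer
  haveI hNorm : (V.subgroupOf W).Normal := by
    rw [Subgroup.normal_subgroupOf_iff hVW]
    intro h k hh hk
    exact (Subgroup.mem_normalizer_iff.mp (hWnorm hk) h).mp hh
  set m := (V.subgroupOf W).index with hm
  have hsup : U.subgroupOf W ⊔ V.subgroupOf W = ⊤ := by
    rw [← Subgroup.subgroupOf_sup hUW hVW, ← hWdef, Subgroup.subgroupOf_self]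
  have hmU : m ∣ Nat.card U := by
    have h1 : m = (V.subgroupOf W).relIndex (U.subgroupOf W) := by
      rw [hm, ← Subgroup.relIndex_top_right, ← hsup,
        Subgroup.relIndex_sup_right]
    have h2 : (V.subgroupOf W).relIndex (U.subgroupOf W) ∣ Nat.card (U.subgroupOf W) :=
      Subgroup.index_dvd_card _
    have h3 : Nat.card (U.subgroupOf W) = Nat.card U :=
      Nat.card_congr (Subgroup.subgroupOfEquivOfLe hUW).toEquiv
    rw [h1]
    exact h3 ▸ h2
  have hcardW : Nat.card W = Nat.card U * m := by
    have := Subgroup.card_mul_index (V.subgroupOf W)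
    have h3 : Nat.card (V.subgroupOf W) = Nat.card V :=
      Nat.card_congr (Subgroup.subgroupOfEquivOfLe hVW).toEquiv
    rw [h3, hcardV] at this
    exact this.symm
  have hposU : 0 < Nat.card U := Nat.card_pos
  have hGeq : Nat.card U * (m * W.index) = Nat.card U * U.index := by
    rw [← mul_assoc, ← hcardW, Subgroup.card_mul_index, ← Subgroup.card_mul_index U]
  have hmdvdI : m ∣ U.index := by
    have := Nat.eq_of_mul_eq_mul_left hposU hGeq
    exact Dvd.intro _ this
  have hm1 : m = 1 := Nat.eq_one_of_dvd_coprimes hHall hmU hmdvdI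
  have hWU : U = W := by
    apply Subgroup.eq_of_le_of_card_ge hUW
    rw [hcardW, hm1, mul_one]
  have hVU : V ≤ U := hWU ▸ hVW
  exact Subgroup.eq_of_le_of_card_ge hVU hcardV.ge
end

section
/- Let G be a finite group, π a set of primes, and U a π-Hall subgroup of G (i.e. |U| is a π-number and (G:U) is a π'-number). Then the number n of conjugates of U in G divides (G:U), and n ≡ 1 modulo the subgroup generated by π, i.e. there exist non-negative integers a_p for p ∈ π with n = 1 + Σ_{p∈π} a_p·p. -/
open MulAction Pointwise

private lemma conj_smul_eq' {G : Type*} [Group G] (g : G) (U : Subgroup G) :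
    ConjAct.toConjAct g • U = U.map (MulAut.conj g).toMonoidHom := by
  ext x
  simp only [Subgroup.mem_pointwise_smul_iff_inv_smul_mem, Subgroup.mem_map,
    MulEquiv.coe_toMonoidHom, MulAut.conj_apply, ConjAct.smul_def, ConjAct.ofConjAct_inv,
    ConjAct.ofConjAct_toConjAct]
  constructor
  · intro h; exact ⟨_, h, by group⟩
  · rintro ⟨u, hu, rfl⟩
    have : g⁻¹ * (g * u * g⁻¹) * g⁻¹⁻¹ = u := by group
    rw [this]; exact hu

private lemma card_conj_eq' {G : Type*} [Group G] (g : G) (U : Subgroup G) :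
    Nat.card (U.map (MulAut.conj g).toMonoidHom) = Nat.card U :=
  (Nat.card_congr ((MulAut.conj g : G ≃* G).subgroupMap U).toEquiv).symm

private lemma index_conj_eq' {G : Type*} [Group G] (g : G) (U : Subgroup G) :
    (U.map (MulAut.conj g).toMonoidHom).index = U.index := by
  rw [Subgroup.index_map_of_injective _ (MulAut.conj g : G ≃* G).injective,
    MonoidHom.range_eq_top_of_surjective _ (MulAut.conj g : G ≃* G).surjective,
    Subgroup.index_top, mul_one]

private lemma card_orbit_dvd' {M α : Type*} [Group M] [Finite M] [MulAction M α] (b : α) :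
    Nat.card (MulAction.orbit M b) ∣ Nat.card M := by
  classical
  haveI : Fintype M := Fintype.ofFinite M
  haveI : Finite (MulAction.orbit M b) := Set.Finite.to_subtype (Set.finite_range _)
  haveI : Fintype (MulAction.orbit M b) := Fintype.ofFinite _
  haveI : Fintype (MulAction.stabilizer M b) := Fintype.ofFinite _
  simp only [Nat.card_eq_fintype_card]
  exact Dvd.intro _ (MulAction.card_orbit_mul_card_stabilizer_eq_card_group M b)

/-- Key lemma: if `U` is a π-Hall subgroup, `V` has the same index, and `U` normalizes `V`,
then `U ≤ V`. -/
private lemma key_le' {G : Type*} [Group G] [Finite G] (π : Set ℕ) (U V : Subgroup G)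
    (h1 : ∀ p : ℕ, p.Prime → p ∣ Nat.card U → p ∈ π)
    (h2 : ∀ p : ℕ, p.Prime → p ∣ U.index → p ∉ π)
    (hV : V.index = U.index) (hle : U ≤ Subgroup.normalizer V) : U ≤ V := by
  set N := Subgroup.normalizer (V : Set G) with hN
  haveI : (V.subgroupOf N).Normal := Subgroup.normal_in_normalizer
  set d := (V.subgroupOf N).relIndex (U.subgroupOf N) with hd
  have hd1 : d ∣ Nat.card U := by
    have h := Subgroup.index_dvd_card
      (G := U.subgroupOf N) ((V.subgroupOf N).subgroupOf (U.subgroupOf N))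
    rwa [show Nat.card (U.subgroupOf N) = Nat.card U from
      Nat.card_congr (Subgroup.subgroupOfEquivOfLe hle).toEquiv] at h
  have hd2 : d ∣ U.index := by
    have e2 : (V.subgroupOf N).relIndex ((V.subgroupOf N) ⊔ (U.subgroupOf N)) ∣
        (V.subgroupOf N).index := Subgroup.relIndex_dvd_index_of_le le_sup_left
    rw [Subgroup.relIndex_sup_left, ← hd] at e2
    have e4 : V.relIndex N ∣ V.index := Subgroup.relIndex_dvd_index_of_le Subgroup.le_normalizer
    exact hV ▸ e2.trans e4
  have hd3 : d = 1 := by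
    by_contra hne
    have hp : (d.minFac).Prime := Nat.minFac_prime hne
    exact h2 _ hp ((d.minFac_dvd).trans hd2) (h1 _ hp ((d.minFac_dvd).trans hd1))
  have hle2 : U.subgroupOf N ≤ V.subgroupOf N := Subgroup.relIndex_eq_one.mp hd3
  intro u hu
  exact hle2 (show (⟨u, hle hu⟩ : N) ∈ U.subgroupOf N from hu)

/-- Let `G` be a finite group, `π` a set of primes and `U` a `π`-Hall subgroup of `G`
(every prime dividing `|U|` is in `π`, no prime dividing `(G : U)` is in `π`). Then the
number `n` of conjugates of `U` in `G` divides `(G : U)`, and there are non-negative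
integers `a_p`, `p ∈ π`, with `n = 1 + ∑_{p ∈ π} a_p * p`. -/
theorem stmt_13 {G : Type*} [Group G] [Finite G] (π : Set ℕ) (U : Subgroup G)
    (h1 : ∀ p : ℕ, p.Prime → p ∣ Nat.card U → p ∈ π)
    (h2 : ∀ p : ℕ, p.Prime → p ∣ U.index → p ∉ π) :
    Nat.card {H : Subgroup G | ∃ g : G, H = U.map (MulAut.conj g).toMonoidHom}
        ∣ U.index ∧
      ∃ (s : Finset ℕ) (a : ℕ → ℕ), (∀ p ∈ s, p.Prime ∧ p ∈ π) ∧
        Nat.card {H : Subgroup G | ∃ g : G, H = U.map (MulAut.conj g).toMonoidHom}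
          = 1 + ∑ p ∈ s, a p * p := by
  classical
  haveI : Finite (ConjAct G) := Finite.of_equiv G ConjAct.toConjAct.toEquiv
  haveI : Finite (Subgroup G) := Finite.of_injective _ SetLike.coe_injective
  have hΩ : {H : Subgroup G | ∃ g : G, H = U.map (MulAut.conj g).toMonoidHom}
      = orbit (ConjAct G) U := by
    ext H
    simp only [Set.mem_setOf_eq, MulAction.mem_orbit_iff]
    constructor
    · rintro ⟨g, rfl⟩; exact ⟨ConjAct.toConjAct g, (conj_smul_eq' g U).symm⟩
    · rintro ⟨g, rfl⟩
      exact ⟨ConjAct.ofConjAct g, by rw [← conj_smul_eq', ConjAct.toConjAct_ofConjAct]⟩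
  rw [hΩ]
  set Q : Subgroup (ConjAct G) := U.map ConjAct.toConjAct.toMonoidHom with hQ
  have hQcard : Nat.card Q = Nat.card U :=
    (Nat.card_congr ((ConjAct.toConjAct : G ≃* ConjAct G).subgroupMap U).toEquiv).symm
  have hQsmul : ∀ q : Q, (q : ConjAct G) • U = U := by
    rintro ⟨q, hq⟩
    obtain ⟨u, hu, rfl⟩ := hq
    show ConjAct.toConjAct u • U = U
    rw [conj_smul_eq']
    ext x
    simp only [Subgroup.mem_map, MulEquiv.coe_toMonoidHom, MulAut.conj_apply]
    constructor
    · rintro ⟨y, hy, rfl⟩; exact U.mul_mem (U.mul_mem hu hy) (U.inv_mem hu)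
    · intro hx
      exact ⟨u⁻¹ * x * u, U.mul_mem (U.mul_mem (U.inv_mem hu) hx) hu, by group⟩
  have hQle : Q ≤ stabilizer (ConjAct G) U := fun q hq =>
    mem_stabilizer_iff.mpr (hQsmul ⟨q, hq⟩)
  have hQidx : Q.index = U.index := by
    rw [hQ, Subgroup.index_map_of_injective _ (ConjAct.toConjAct : G ≃* ConjAct G).injective,
      MonoidHom.range_eq_top_of_surjective _ (ConjAct.toConjAct : G ≃* ConjAct G).surjective,
      Subgroup.index_top, mul_one]
  have hcard_orb : Nat.card (orbit (ConjAct G) U) = (stabilizer (ConjAct G) U).index := by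
    rw [MulAction.index_stabilizer, Nat.card_coe_set_eq]
  have part1 : Nat.card (orbit (ConjAct G) U) ∣ U.index := by
    rw [hcard_orb, ← hQidx]
    exact Subgroup.index_dvd_of_le hQle
  refine ⟨part1, ?_⟩
  -- the distinguished fixed point
  set x0 : orbit (ConjAct G) U := ⟨U, mem_orbit_self U⟩ with hx0
  have hx0fix : ∀ q : Q, q • x0 = x0 := by
    intro q
    apply Subtype.ext
    show (q : ConjAct G) • U = U
    exact hQsmul q
  -- any Q-fixed point equals x0
  have keyfix : ∀ x : orbit (ConjAct G) U, (∀ q : Q, q • x = x) → x = x0 := by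
    rintro ⟨V, hV⟩ hfix
    obtain ⟨g, hg⟩ := MulAction.mem_orbit_iff.mp hV
    have hVeq : V = U.map (MulAut.conj (ConjAct.ofConjAct g)).toMonoidHom := by
      rw [← hg, ← conj_smul_eq', ConjAct.toConjAct_ofConjAct]
    have hVidx : V.index = U.index := by rw [hVeq]; exact index_conj_eq' _ U
    have hVcard : Nat.card V = Nat.card U := by rw [hVeq]; exact card_conj_eq' _ U
    have hle : U ≤ Subgroup.normalizer V := by
      intro u hu
      have h := hfix ⟨ConjAct.toConjAct u, ⟨u, hu, rfl⟩⟩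
      have h' : ConjAct.toConjAct u • V = V := congrArg Subtype.val h
      rw [conj_smul_eq'] at h'
      rw [Subgroup.mem_normalizer_iff]
      intro z
      constructor
      · intro hz
        rw [← h']
        exact ⟨z, hz, rfl⟩
      · intro hz
        rw [← h'] at hz
        obtain ⟨y, hy, hyz⟩ := hz
        simp only [MulEquiv.coe_toMonoidHom, MulAut.conj_apply] at hyz
        have hyz' : y = z := mul_left_cancel (mul_right_cancel hyz)
        exact hyz' ▸ hy
    have hUV : U ≤ V := key_le' π U V h1 h2 hVidx hle
    exact Subtype.ext (Subgroup.eq_of_le_of_card_ge hUV (le_of_eq hVcard)).symm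
  -- orbit decomposition under Q
  haveI : Fintype (orbit (ConjAct G) U) := Fintype.ofFinite _
  haveI : Fintype (orbitRel.Quotient Q (orbit (ConjAct G) U)) := Fintype.ofFinite _
  haveI instF : ∀ ω : orbitRel.Quotient Q (orbit (ConjAct G) U), Fintype ω.orbit :=
    fun _ => Fintype.ofFinite _
  set c : orbitRel.Quotient Q (orbit (ConjAct G) U) → ℕ := fun ω => Nat.card ω.orbit with hc
  have hsum : Nat.card (orbit (ConjAct G) U)
      = ∑ ω : orbitRel.Quotient Q (orbit (ConjAct G) U), c ω := by
    rw [Nat.card_eq_fintype_card, Fintype.card_congr (selfEquivSigmaOrbits' Q _),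
      Fintype.card_sigma]
    exact Finset.sum_congr rfl fun ω _ => (Nat.card_eq_fintype_card).symm
  have horb : ∀ ω : orbitRel.Quotient Q (orbit (ConjAct G) U),
      (ω.orbit : Set (orbit (ConjAct G) U)) = orbit Q ω.out :=
    fun ω => orbitRel.Quotient.orbit_eq_orbit_out ω Quotient.out_eq'
  have hdvd : ∀ ω : orbitRel.Quotient Q (orbit (ConjAct G) U), c ω ∣ Nat.card U := by
    intro ω
    rw [hc]
    simp only
    rw [horb ω, ← hQcard]
    exact card_orbit_dvd' _
  set ω0 : orbitRel.Quotient Q (orbit (ConjAct G) U) := Quotient.mk'' x0 with hω0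
  have horb0 : (ω0.orbit : Set (orbit (ConjAct G) U)) = {x0} := by
    ext y
    constructor
    · intro hy
      have hy' : y ∈ orbit Q x0 := hy
      obtain ⟨q, hq⟩ := MulAction.mem_orbit_iff.mp hy'
      rw [← hq, hx0fix q]; rfl
    · intro hy
      rw [Set.mem_singleton_iff] at hy
      subst hy
      exact MulAction.mem_orbit_self x0
  have hcω0 : c ω0 = 1 := by
    rw [hc]; simp only
    rw [horb0]
    simp
  have hone : ∀ ω : orbitRel.Quotient Q (orbit (ConjAct G) U), c ω = 1 → ω = ω0 := by
    intro ω hω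
    have h1' : Nat.card (orbit Q ω.out) = 1 := by rw [← horb ω]; exact hω
    have hfix : ∀ q : Q, q • ω.out = ω.out := by
      haveI : Fintype (orbit Q ω.out) := Fintype.ofFinite _
      have := (MulAction.mem_fixedPoints_iff_card_orbit_eq_one (M := Q) (a := ω.out)).mpr
        (by rw [← Nat.card_eq_fintype_card] at *; exact h1')
      exact fun q => this q
    have := keyfix ω.out hfix
    rw [← Quotient.out_eq' ω, this]
  -- assemble
  have hM : (∑ ω ∈ Finset.univ.erase ω0, c ω) ∈
      AddSubmonoid.closure {p : ℕ | p.Prime ∧ p ∈ π} := by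
    apply AddSubmonoid.sum_mem
    intro ω hω
    have hne1 : c ω ≠ 1 := fun h => (Finset.ne_of_mem_erase hω) (hone ω h)
    have hp : (c ω).minFac.Prime := Nat.minFac_prime hne1
    have hpdvd : (c ω).minFac ∣ Nat.card U := (Nat.minFac_dvd _).trans (hdvd ω)
    have hpmem : (c ω).minFac ∈ {p : ℕ | p.Prime ∧ p ∈ π} := ⟨hp, h1 _ hp hpdvd⟩
    have : c ω = (c ω / (c ω).minFac) • (c ω).minFac := by
      rw [smul_eq_mul, Nat.div_mul_cancel (Nat.minFac_dvd _)]
    rw [this]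
    exact AddSubmonoid.nsmul_mem (S := AddSubmonoid.closure {p : ℕ | p.Prime ∧ p ∈ π})
      (AddSubmonoid.subset_closure hpmem) _
  obtain ⟨l, hl, hlsum⟩ := AddSubmonoid.exists_multiset_of_mem_closure hM
  refine ⟨l.toFinset, fun p => l.count p, fun p hp => hl p (Multiset.mem_toFinset.mp hp), ?_⟩
  have hfin : ∑ p ∈ l.toFinset, l.count p * p = l.sum := by
    rw [Finset.sum_multiset_count]
    simp [smul_eq_mul]
  rw [hfin, hlsum, hsum, ← Finset.add_sum_erase _ c (Finset.mem_univ ω0), hcω0]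
end

section
/- Let G be a finite solvable group whose order is divisible by 4 but not by 8 and not by 12. Then G has a normal subgroup of index 4. -/
/-- A finite solvable group whose order is divisible by 4 but neither by 8 nor by 12
has a normal subgroup of index 4. -/
theorem stmt_14 {G : Type*} [Group G] [Finite G] [Group.IsSolvable G]
    (h4 : 4 ∣ Nat.card G) (h8 : ¬ 8 ∣ Nat.card G) (h12 : ¬ 12 ∣ Nat.card G) :
    ∃ U : Subgroup G, U.Normal ∧ U.index = 4 := by
  have hp : Fact (Nat.Prime 2) := ⟨Nat.prime_two⟩
  obtain ⟨P⟩ : Nonempty (Sylow 2 G) := inferInstance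
  have hfact : (Nat.card G).factorization 2 = 2 := by
    have h2 : 2 ≤ (Nat.card G).factorization 2 := by
      rw [← Nat.Prime.pow_dvd_iff_le_factorization Nat.prime_two Nat.card_pos.ne']
      simpa using h4
    have h3 : (Nat.card G).factorization 2 < 3 := by
      by_contra h
      exact h8 (by
        have : (2:ℕ)^3 ∣ Nat.card G := by
          rw [Nat.Prime.pow_dvd_iff_le_factorization Nat.prime_two Nat.card_pos.ne']
          omega
        simpa using this)
    omega
  have hcardP : Nat.card (P : Subgroup G) = 4 := by
    rw [P.card_eq_multiplicity, hfact]; norm_num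
  have hcomm : ∀ a b : (P : Subgroup G), a * b = b * a :=
    IsPGroup.commutative_of_card_eq_prime_sq (p := 2) (by rw [hcardP]; norm_num)
  have hPC : (P : Subgroup G) ≤ Subgroup.centralizer (P : Subgroup G) := by
    intro a ha b hb
    exact congrArg Subtype.val (hcomm ⟨b, hb⟩ ⟨a, ha⟩)
  have hP : Subgroup.normalizer ((P : Subgroup G) : Set G) ≤ Subgroup.centralizer (P : Set G) := by
    have hker := Subgroup.normalizerMonoidHom_ker (H := (P : Subgroup G))
    have hk24 : (P : Subgroup G).normalizerMonoidHom.ker.index ∣ 24 := by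
      have h1 := Subgroup.index_ker (P : Subgroup G).normalizerMonoidHom
      have h2 : Nat.card (P : Subgroup G).normalizerMonoidHom.range ∣
          Nat.card (MulAut (P : Subgroup G)) := Subgroup.card_subgroup_dvd_card _
      have h3 : Nat.card (MulAut (P : Subgroup G)) ∣
          Nat.card (Equiv.Perm (P : Subgroup G)) :=
        Subgroup.card_dvd_of_injective (MulAut.toPerm (M := ↥(P : Subgroup G)))
          (by intro a b h; ext x; exact congrArg Subtype.val (DFunLike.congr_fun h x))
      have h4' : Nat.card (Equiv.Perm (P : Subgroup G)) = 24 := by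
        classical
        have := Fintype.ofFinite (↥(P : Subgroup G))
        rw [Nat.card_eq_fintype_card, Fintype.card_perm, ← Nat.card_eq_fintype_card, hcardP]
        rfl
      rw [h1]
      exact h2.trans (h4' ▸ h3)
    have hkodd : ¬ 2 ∣ (P : Subgroup G).normalizerMonoidHom.ker.index := by
      intro h2k
      have hle : (P : Subgroup G).subgroupOf (Subgroup.normalizer ((P : Subgroup G) : Set G)) ≤
          (P : Subgroup G).normalizerMonoidHom.ker := by
        rw [hker]
        intro x hx
        exact hPC hx
      have hdvd : (P : Subgroup G).normalizerMonoidHom.ker.index ∣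
          ((P : Subgroup G).subgroupOf (Subgroup.normalizer ((P : Subgroup G) : Set G))).index :=
        Subgroup.index_dvd_of_le hle
      have hrel : ((P : Subgroup G).subgroupOf (Subgroup.normalizer ((P : Subgroup G) : Set G))).index ∣
          (P : Subgroup G).index :=
        Subgroup.relIndex_dvd_index_of_le Subgroup.le_normalizer
      exact P.not_dvd_index (h2k.trans (hdvd.trans hrel))
    have hkG : (P : Subgroup G).normalizerMonoidHom.ker.index ∣ Nat.card G :=
      (Subgroup.index_dvd_card _).trans (Subgroup.card_subgroup_dvd_card _)
    have hcop : Nat.Coprime ((P : Subgroup G).normalizerMonoidHom.ker.index) 8 := by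
      have := (Nat.Prime.coprime_iff_not_dvd Nat.prime_two).mpr hkodd
      exact Nat.Coprime.pow_right 3 (Nat.coprime_comm.mp this)
    have hk3 : (P : Subgroup G).normalizerMonoidHom.ker.index ∣ 3 :=
      hcop.dvd_of_dvd_mul_left (show _ ∣ 8 * 3 by norm_num; exact hk24)
    rcases (Nat.dvd_prime Nat.prime_three).mp hk3 with h1 | h3
    · have : (P : Subgroup G).normalizerMonoidHom.ker = ⊤ := Subgroup.index_eq_one.mp h1
      rw [hker] at this
      exact Subgroup.subgroupOf_eq_top.mp this
    · exfalso
      apply h12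
      rw [h3] at hkG
      have : (4 : ℕ) * 3 ∣ Nat.card G :=
        (by norm_num : Nat.Coprime 4 3).mul_dvd_of_dvd_of_dvd h4 hkG
      simpa using this
  have key := MonoidHom.ker_transferSylow_isComplement' P hP
  exact ⟨(MonoidHom.transferSylow P hP).ker, MonoidHom.normal_ker _,
    by rw [key.symm.index_eq_card, hcardP]⟩
end

section
/- A positive integer n is the order of some finite group generated by two elements whose commutator has order 2 if and only if n is divisible by 8 or by 12. (For the 'only if' direction one may assume the fact that every finite group whose order is not divisible by 8 or 12 is solvable.) -/
open scoped commutatorElement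

def homOfPow {G : Type*} [Group G] (k : ℕ) [NeZero k] (σ : G) (h : σ ^ k = 1) :
    Multiplicative (ZMod k) →* G where
  toFun x := σ ^ (x.toAdd).val
  map_one' := by simp [ZMod.val_zero]
  map_mul' x y := by
    simp only [toAdd_mul, ZMod.val_add, ← pow_eq_pow_mod _ h, pow_add]

theorem homOfPow_apply_one {G : Type*} [Group G] (k : ℕ) [NeZero k] (hk : 1 < k) (σ : G)
    (h : σ ^ k = 1) : homOfPow k σ h (Multiplicative.ofAdd 1) = σ := by
  haveI : Fact (1 < k) := ⟨hk⟩
  simp [homOfPow, ZMod.val_one]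


open Nat in
theorem card_mulAut_dvd (P : Type*) [Group P] [Finite P] :
    Nat.card (MulAut P) ∣ (Nat.card P - 1)! := by
  classical
  haveI : Fintype P := Fintype.ofFinite P
  let f : MulAut P →* Equiv.Perm {x : P // x ≠ 1} :=
  { toFun := fun σ => σ.toEquiv.subtypeEquiv (fun a => not_congr (by simp))
    map_one' := by ext x; rfl
    map_mul' := fun σ τ => by ext x; rfl }
  have hf : Function.Injective f := by
    intro σ τ h
    ext x
    by_cases hx : x = 1
    · simp [hx]
    · exact congrArg (fun e => ((e : Equiv.Perm {x : P // x ≠ 1}) ⟨x, hx⟩ : {x : P // x ≠ 1}).1) h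
  have := Subgroup.card_dvd_of_injective f hf
  rw [Nat.card_eq_fintype_card (α := Equiv.Perm {x : P // x ≠ 1}), Fintype.card_perm,
    Fintype.card_subtype_compl, Fintype.card_subtype_eq] at this
  simpa [Nat.card_eq_fintype_card] using this


/-- A witness that `n` is tH: a finite group of order `n` generated by two elements
whose commutator has order 2. -/
structure THWitness (n : ℕ) where
  G : Type
  [grp : Group G]
  [fin : Finite G]
  card_eq : Nat.card G = n
  a : G
  b : G
  gen : Subgroup.closure ({a, b} : Set G) = ⊤
  comm_order : orderOf ⁅a, b⁆ = 2

open SemidirectProduct in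
theorem tH_eight (m : ℕ) (hm : 0 < m) : Nonempty (THWitness (8 * m)) := by
  haveI : NeZero (4 * m) := ⟨by omega⟩
  set u : ZMod (4 * m) := 2 * (m : ZMod (4 * m)) + 1 with hu_def
  have h4 : (4 : ZMod (4 * m)) * (m : ZMod (4 * m)) = 0 := by
    have := ZMod.natCast_self (4 * m)
    push_cast at this
    linear_combination this
  have hu : u * u = 1 := by
    rw [hu_def]; linear_combination ((m : ZMod (4 * m)) + 1) * h4
  let σ : MulAut (Multiplicative (ZMod (4 * m))) :=
  { toFun := fun x => Multiplicative.ofAdd (u * x.toAdd)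
    invFun := fun x => Multiplicative.ofAdd (u * x.toAdd)
    left_inv := fun x => by simp [← mul_assoc, hu]
    right_inv := fun x => by simp [← mul_assoc, hu]
    map_mul' := fun x y => by simp [toAdd_mul, mul_add, ofAdd_add] }
  have hσ2 : σ ^ 2 = 1 := by
    ext x
    rw [sq]
    show σ (σ x) = x
    show Multiplicative.ofAdd (u * Multiplicative.toAdd (Multiplicative.ofAdd (u * Multiplicative.toAdd x))) = x
    simp [← mul_assoc, hu]
  let φ := homOfPow 2 σ hσ2
  let Gr := Multiplicative (ZMod (4 * m)) ⋊[φ] Multiplicative (ZMod 2)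
  have e : Gr ≃ Multiplicative (ZMod (4 * m)) × Multiplicative (ZMod 2) :=
    ⟨fun x => (x.left, x.right), fun p => ⟨p.1, p.2⟩, fun x => rfl, fun p => rfl⟩
  haveI : Finite Gr := Finite.of_equiv _ e.symm
  have hcard : Nat.card Gr = 8 * m := by
    rw [Nat.card_congr e, Nat.card_prod]
    simp only [Nat.card_eq_fintype_card]
    rw [Fintype.card_multiplicative, Fintype.card_multiplicative, ZMod.card, ZMod.card]
    ring
  let a : Gr := inl (Multiplicative.ofAdd 1)
  let b : Gr := inr (Multiplicative.ofAdd 1)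
  -- commutator
  have hφ : φ (Multiplicative.ofAdd 1) = σ := homOfPow_apply_one 2 one_lt_two σ hσ2
  have hcomm : ⁅a, b⁆ = inl (Multiplicative.ofAdd (1 - u)) := by
    show a * b * a⁻¹ * b⁻¹ = _
    have : (b * a⁻¹ * b⁻¹ : Gr) = inl (φ (Multiplicative.ofAdd 1) ((Multiplicative.ofAdd (1 : ZMod (4 * m)))⁻¹)) := by
      rw [inl_aut]
      simp [a, b, mul_assoc]
    rw [show a * b * a⁻¹ * b⁻¹ = a * (b * a⁻¹ * b⁻¹) by group, this, hφ]
    show inl (Multiplicative.ofAdd 1) * inl (σ (Multiplicative.ofAdd (1:ZMod (4*m)))⁻¹) = _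
    rw [← map_mul]
    congr 1
    show Multiplicative.ofAdd 1 * σ (Multiplicative.ofAdd (-1)) = _
    show Multiplicative.ofAdd 1 * Multiplicative.ofAdd (u * Multiplicative.toAdd (Multiplicative.ofAdd (-1 : ZMod (4*m)))) = _
    rw [toAdd_ofAdd, ← ofAdd_add]
    congr 1
    ring
  have hc2 : ⁅a, b⁆ ^ 2 = 1 := by
    rw [hcomm, ← map_pow, ← ofAdd_nsmul]
    convert map_one (inl (φ := φ))
    convert ofAdd_zero
    rw [hu_def]
    push_cast
    linear_combination -h4
  have hcne : ⁅a, b⁆ ≠ 1 := by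
    rw [hcomm]
    intro h
    rw [show (1 : Gr) = inl 1 from rfl] at h
    have := inl_injective h
    rw [show (1 : Multiplicative (ZMod (4*m))) = Multiplicative.ofAdd 0 from rfl] at this
    have h2 : (1 : ZMod (4 * m)) - u = 0 := by
      simpa using congrArg Multiplicative.toAdd this
    rw [hu_def] at h2
    have h2m : ((2 * m : ℕ) : ZMod (4 * m)) = 0 := by push_cast; linear_combination -h2
    rw [ZMod.natCast_eq_zero_iff] at h2m
    exact absurd (Nat.le_of_dvd (by omega) h2m) (by omega)
  have horder : orderOf ⁅a, b⁆ = 2 := orderOf_eq_prime hc2 hcne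
  -- generation
  have hgen : Subgroup.closure ({a, b} : Set Gr) = ⊤ := by
    rw [eq_top_iff]
    intro x _
    rw [← inl_left_mul_inr_right x]
    have ha : a ∈ Subgroup.closure ({a, b} : Set Gr) :=
      Subgroup.subset_closure (Set.mem_insert _ _)
    have hb : b ∈ Subgroup.closure ({a, b} : Set Gr) :=
      Subgroup.subset_closure (Set.mem_insert_of_mem _ rfl)
    refine mul_mem ?_ ?_
    · have : (inl x.left : Gr) = a ^ (x.left.toAdd).val := by
        rw [← map_pow]
        congr 1
        rw [← ofAdd_nsmul, nsmul_eq_mul, mul_one, ZMod.natCast_rightInverse x.left.toAdd,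
          ofAdd_toAdd]
      rw [this]; exact pow_mem ha _
    · have : (inr x.right : Gr) = b ^ (x.right.toAdd).val := by
        rw [← map_pow]
        congr 1
        rw [← ofAdd_nsmul, nsmul_eq_mul, mul_one, ZMod.natCast_rightInverse x.right.toAdd,
          ofAdd_toAdd]
      rw [this]; exact pow_mem hb _
  exact ⟨{ G := Gr, card_eq := hcard, a := a, b := b, gen := hgen, comm_order := horder }⟩

open SemidirectProduct in
theorem tH_twelve (m : ℕ) (hm : 0 < m) : Nonempty (THWitness (12 * m)) := by
  haveI : NeZero (3 * m) := ⟨by omega⟩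
  let τ : (ZMod 2 × ZMod 2) ≃+ (ZMod 2 × ZMod 2) :=
  { toFun := fun p => (p.2, p.1 + p.2)
    invFun := fun p => (p.1 + p.2, p.1)
    left_inv := by decide
    right_inv := by decide
    map_add' := by decide }
  let σ : MulAut (Multiplicative (ZMod 2 × ZMod 2)) := AddEquiv.toMultiplicative τ
  have hσ3 : σ ^ 3 = 1 := by
    refine MulEquiv.ext fun p => ?_
    show (σ ^ 3) p = p
    rw [pow_succ, pow_succ, pow_one, MulAut.mul_apply, MulAut.mul_apply]
    revert p
    decide
  have hσm : σ ^ (3 * m) = 1 := by rw [pow_mul, hσ3, one_pow]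
  let φ := homOfPow (3 * m) σ hσm
  let Gr := Multiplicative (ZMod 2 × ZMod 2) ⋊[φ] Multiplicative (ZMod (3 * m))
  have e : Gr ≃ Multiplicative (ZMod 2 × ZMod 2) × Multiplicative (ZMod (3 * m)) :=
    ⟨fun x => (x.left, x.right), fun p => ⟨p.1, p.2⟩, fun x => rfl, fun p => rfl⟩
  haveI : Finite Gr := Finite.of_equiv _ e.symm
  have hcard : Nat.card Gr = 12 * m := by
    rw [Nat.card_congr e, Nat.card_prod]
    simp only [Nat.card_eq_fintype_card]
    simp [Fintype.card_multiplicative, Fintype.card_prod, ZMod.card]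
    ring
  let v : Multiplicative (ZMod 2 × ZMod 2) := Multiplicative.ofAdd (1, 0)
  let b : Gr := inr (Multiplicative.ofAdd 1)
  let a : Gr := inl v * b
  have hφ : φ (Multiplicative.ofAdd 1) = σ :=
    homOfPow_apply_one (3 * m) (by omega) σ hσm
  have h1 : b * inl v⁻¹ * b⁻¹ = (inl (σ v⁻¹) : Gr) := by
    rw [← hφ, inl_aut]
    simp [b, mul_assoc]
  have hcomm : ⁅a, b⁆ = inl (v * σ v⁻¹) := by
    show a * b * a⁻¹ * b⁻¹ = _
    rw [map_mul, ← h1]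
    show inl v * b * b * (inl v * b)⁻¹ * b⁻¹ = _
    rw [map_inv]
    simp only [mul_inv_rev, mul_assoc, mul_inv_cancel_left]
  have hval : v * σ v⁻¹ = Multiplicative.ofAdd (1, 1) := by decide
  have hc2 : ⁅a, b⁆ ^ 2 = 1 := by
    rw [hcomm, hval, ← map_pow]
    convert map_one (inl (φ := φ))
    decide
  have hcne : ⁅a, b⁆ ≠ 1 := by
    rw [hcomm, hval]
    intro h
    rw [show (1 : Gr) = inl 1 from rfl] at h
    exact absurd (inl_injective h) (by decide)
  have horder : orderOf ⁅a, b⁆ = 2 := orderOf_eq_prime hc2 hcne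
  have hgen : Subgroup.closure ({a, b} : Set Gr) = ⊤ := by
    rw [eq_top_iff]
    intro x _
    have ha : a ∈ Subgroup.closure ({a, b} : Set Gr) :=
      Subgroup.subset_closure (Set.mem_insert _ _)
    have hb : b ∈ Subgroup.closure ({a, b} : Set Gr) :=
      Subgroup.subset_closure (Set.mem_insert_of_mem _ rfl)
    have hv : (inl v : Gr) ∈ Subgroup.closure ({a, b} : Set Gr) := by
      have : (inl v : Gr) = a * b⁻¹ := by exact (mul_inv_cancel_right (inl v : Gr) b).symm
      rw [this]; exact mul_mem ha (inv_mem hb)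
    have hσv : (inl (σ v) : Gr) ∈ Subgroup.closure ({a, b} : Set Gr) := by
      have : (inl (σ v) : Gr) = b * inl v * b⁻¹ := by
        rw [← hφ, inl_aut]
        simp [b, mul_assoc]
      rw [this]
      exact mul_mem (mul_mem hb hv) (inv_mem hb)
    rw [← inl_left_mul_inr_right x]
    refine mul_mem ?_ ?_
    · have hw : ∀ w : Multiplicative (ZMod 2 × ZMod 2),
          w = v ^ ((Multiplicative.toAdd w).1.val) * (σ v) ^ ((Multiplicative.toAdd w).2.val) := by
        decide
      rw [hw x.left, map_mul, map_pow, map_pow]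
      exact mul_mem (pow_mem hv _) (pow_mem hσv _)
    · have : (inr x.right : Gr) = b ^ (x.right.toAdd).val := by
        rw [← map_pow]
        congr 1
        rw [← ofAdd_nsmul, nsmul_eq_mul, mul_one, ZMod.natCast_rightInverse x.right.toAdd,
          ofAdd_toAdd]
      rw [this]; exact pow_mem hb _
  exact ⟨{ G := Gr, card_eq := hcard, a := a, b := b, gen := hgen, comm_order := horder }⟩

theorem tH_forward (n : ℕ) (hn : 0 < n) (W : THWitness n) (h8 : ¬ 8 ∣ n) (h12 : ¬ 12 ∣ n) :
    False := by
  obtain ⟨G, hcard, a, b, hgen, hord⟩ := W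
  haveI : Fact (Nat.Prime 2) := ⟨Nat.prime_two⟩
  have h2n : 2 ∣ n := by
    rw [← hcard, ← hord]; exact orderOf_dvd_natCard _
  set v := n.factorization 2 with hv_def
  have hv1 : 1 ≤ v := (Nat.Prime.factorization_pos_of_dvd Nat.prime_two hn.ne' h2n)
  have hv2 : v ≤ 2 := by
    by_contra h
    have h3 : 2 ^ 3 ∣ n :=
      (Nat.Prime.pow_dvd_iff_le_factorization Nat.prime_two hn.ne').mpr (by omega)
    norm_num at h3
    exact h8 h3
  let P : Sylow 2 G := default
  have hPcard : Nat.card (P : Subgroup G) = 2 ^ v := by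
    rw [Sylow.card_eq_multiplicity, hcard]
  -- P is commutative
  have hcommP : ∀ x y : (P : Subgroup G), x * y = y * x := by
    rcases (by omega : v = 1 ∨ v = 2) with h | h
    · rw [h, pow_one] at hPcard
      haveI := isCyclic_of_prime_card (p := 2) hPcard
      letI := IsCyclic.commGroup (α := (P : Subgroup G))
      exact mul_comm
    · rw [h] at hPcard
      exact IsPGroup.commutative_of_card_eq_prime_sq hPcard
  haveI hPcomm : IsMulCommutative (P : Subgroup G) := ⟨⟨hcommP⟩⟩
  -- consider the conjugation map N(P) → Aut(P)
  set f := Subgroup.normalizerMonoidHom (P : Subgroup G) with hf_def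
  set u := Nat.card f.range with hu_def
  have hu1 : u ∣ Nat.factorial (2 ^ v - 1) := by
    calc u ∣ Nat.card (MulAut (P : Subgroup G)) := Subgroup.card_subgroup_dvd_card _
    _ ∣ Nat.factorial (Nat.card (P : Subgroup G) - 1) := card_mulAut_dvd _
    _ = Nat.factorial (2 ^ v - 1) := by rw [hPcard]
  have hu2 : u * 2 ^ v ∣ n := by
    have hN : Nat.card (Subgroup.normalizer ((P : Subgroup G) : Set G)) = u * Nat.card f.ker := by
      rw [Subgroup.card_eq_card_quotient_mul_card_subgroup f.ker]
      congr 1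
      exact Nat.card_congr (QuotientGroup.quotientKerEquivRange f).toEquiv
    have hPk : Nat.card (P : Subgroup G) ∣ Nat.card f.ker := by
      have hle : (P : Subgroup G).subgroupOf (Subgroup.normalizer ((P : Subgroup G) : Set G)) ≤ f.ker := by
        rw [hf_def, Subgroup.normalizerMonoidHom_ker]
        intro x hx
        rw [Subgroup.mem_subgroupOf] at hx ⊢
        exact Subgroup.le_centralizer _ hx
      have := Subgroup.card_dvd_of_le hle
      rwa [Nat.card_congr (Subgroup.subgroupOfEquivOfLe Subgroup.le_normalizer).toEquiv] at this
    calc u * 2 ^ v = u * Nat.card (P : Subgroup G) := by rw [hPcard]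
    _ ∣ u * Nat.card f.ker := mul_dvd_mul_left u hPk
    _ = Nat.card (Subgroup.normalizer ((P : Subgroup G) : Set G)) := hN.symm
    _ ∣ Nat.card G := Subgroup.card_subgroup_dvd_card _
    _ = n := hcard
  have hu_one : u = 1 := by
    rcases (by omega : v = 1 ∨ v = 2) with h | h
    · rw [h] at hu1
      norm_num [Nat.factorial] at hu1
      exact hu1
    · rw [h] at hu1 hu2
      have h6 : u ∣ 6 := by norm_num [Nat.factorial] at hu1; exact hu1
      have h2u : ¬ 2 ∣ u := fun hd => h8 (by
        have : 2 * 4 ∣ u * 4 := mul_dvd_mul_right hd 4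
        calc (8 : ℕ) = 2 * 4 := by norm_num
        _ ∣ u * 4 := this
        _ ∣ n := by simpa using hu2)
      have h3u : ¬ 3 ∣ u := fun hd => h12 (by
        have : 3 * 4 ∣ u * 4 := mul_dvd_mul_right hd 4
        calc (12 : ℕ) = 3 * 4 := by norm_num
        _ ∣ u * 4 := this
        _ ∣ n := by simpa using hu2)
      have hcop : Nat.Coprime u 6 := by
        have c2 : Nat.Coprime u 2 :=
          ((Nat.Prime.coprime_iff_not_dvd Nat.prime_two).mpr h2u).symm
        have c3 : Nat.Coprime u 3 :=
          ((Nat.Prime.coprime_iff_not_dvd Nat.prime_three).mpr h3u).symm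
        simpa using Nat.Coprime.mul_right c2 c3
      exact Nat.Coprime.eq_one_of_dvd hcop h6
  -- hence normalizer ≤ centralizer
  have hNC : Subgroup.normalizer ((P : Subgroup G) : Set G) ≤ Subgroup.centralizer ((P : Subgroup G) : Set G) := by
    intro g hg
    have hmem : (⟨g, hg⟩ : Subgroup.normalizer ((P : Subgroup G) : Set G)) ∈ f.ker := by
      rw [MonoidHom.mem_ker]
      have hr : f.range = ⊥ := Subgroup.eq_bot_of_card_eq _ hu_one
      have hm : f ⟨g, hg⟩ ∈ f.range := ⟨_, rfl⟩
      rwa [hr, Subgroup.mem_bot] at hm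
    rw [hf_def, Subgroup.normalizerMonoidHom_ker] at hmem
    exact Subgroup.mem_subgroupOf.mp hmem
  haveI : Finite (Sylow 2 G) :=
    Finite.of_injective (fun Q : Sylow 2 G => (Q : Subgroup G))
      (fun Q R h => Sylow.ext h)
  have hker := MonoidHom.not_dvd_card_ker_transferSylow P hNC
  have hc : ⁅a, b⁆ ∈ (MonoidHom.transferSylow P hNC).ker := by
    rw [MonoidHom.mem_ker, map_commutatorElement]
    exact commutatorElement_eq_one_iff_mul_comm.mpr (hcommP _ _)
  have hdvd := Subgroup.orderOf_dvd_natCard _ hc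
  rw [hord] at hdvd
  exact hker hdvd

/-- A positive integer `n` is the order of a finite group generated by two elements
whose commutator has order 2 if and only if `8 ∣ n` or `12 ∣ n`.  (The solvability of
finite groups of order not divisible by 8 or 12, which follows from Thompson's
classification of minimal finite simple groups, is taken as a hypothesis.) -/
theorem stmt_17
    (hsolv : ∀ (H : Type) [Group H] [Finite H],
      ¬ 8 ∣ Nat.card H → ¬ 12 ∣ Nat.card H → IsSolvable H)
    (n : ℕ) (hn : 0 < n) :
    Nonempty (THWitness n) ↔ 8 ∣ n ∨ 12 ∣ n := by
  constructor
  · rintro ⟨W⟩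
    by_contra h
    push_neg at h
    exact tH_forward n hn W h.1 h.2
  · rintro (⟨m, rfl⟩ | ⟨m, rfl⟩)
    · exact tH_eight m (by omega)
    · exact tH_twelve m (by omega)
end

section
/- Let g ≥ 2, let G be a group acting on data as follows: d a positive integer, g_Q ≥ 1 an integer, k ≥ 0 an integer, and positive integers s_1, …, s_k, e_1, …, e_k with s_i·e_i = d and e_i ≥ 2, satisfying the Riemann–Hurwitz relation 2g − 2 = d(2g_Q − 2) + Σ_{i=1}^{k} s_i(e_i − 1). Then d ≤ 4g − 4, with equality if and only if g_Q = 1, k = 1, and e_1 = 2. -/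
/-- Numerical form of the bound on the translation group: let `g ≥ 2`, `d ≥ 1`,
`gQ ≥ 1`, `k ≥ 0`, and positive integers `s i`, `e i` with `s i * e i = d` and
`e i ≥ 2`, satisfying the Riemann–Hurwitz relation
`2g - 2 = d(2 gQ - 2) + ∑ i, s i (e i - 1)`.  Then `d ≤ 4g - 4`, with equality if and
only if `gQ = 1`, `k = 1` and all `e i = 2`. -/
theorem stmt_19 (g d gQ k : ℕ) (hg : 2 ≤ g) (hd : 1 ≤ d) (hgQ : 1 ≤ gQ)
    (s e : Fin k → ℕ) (hse : ∀ i, s i * e i = d) (hs : ∀ i, 1 ≤ s i)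
    (he : ∀ i, 2 ≤ e i)
    (hRH : (2 * g : ℤ) - 2
      = (d : ℤ) * (2 * gQ - 2) + ∑ i, (s i : ℤ) * ((e i : ℤ) - 1)) :
    d ≤ 4 * g - 4 ∧ (d = 4 * g - 4 ↔ gQ = 1 ∧ k = 1 ∧ ∀ i, e i = 2) := by
  -- each ramification term is at least d/2
  have hterm : ∀ i, (d : ℤ) ≤ 2 * ((s i : ℤ) * ((e i : ℤ) - 1)) := by
    intro i
    have h1 : 2 * s i ≤ d := by
      have h2 := hse i; have h3 := he i
      calc 2 * s i = s i * 2 := by ring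
        _ ≤ s i * e i := Nat.mul_le_mul_left _ h3
        _ = d := h2
    have h2 : (s i : ℤ) * (e i : ℤ) = d := by exact_mod_cast hse i
    have h1' : (2 : ℤ) * s i ≤ d := by exact_mod_cast h1
    nlinarith
  have htermpos : ∀ i, (0 : ℤ) ≤ (s i : ℤ) * ((e i : ℤ) - 1) := by
    intro i
    have := hterm i
    have : (0:ℤ) < d := by exact_mod_cast hd
    nlinarith [hterm i]
  set T : ℤ := ∑ i, (s i : ℤ) * ((e i : ℤ) - 1) with hT
  have hTnonneg : 0 ≤ T := Finset.sum_nonneg fun i _ => htermpos i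
  have hsum : (k : ℤ) * d ≤ 2 * T := by
    have h := Finset.card_nsmul_le_sum (Finset.univ : Finset (Fin k))
      (fun i => 2 * ((s i : ℤ) * ((e i : ℤ) - 1))) ((d : ℤ)) (fun i _ => hterm i)
    have h2 : ∑ i, 2 * ((s i : ℤ) * ((e i : ℤ) - 1)) = 2 * T := by
      rw [hT, Finset.mul_sum]
    simp only [Finset.card_univ, Fintype.card_fin, nsmul_eq_mul] at h
    linarith
  have hdpos : (0:ℤ) < d := by exact_mod_cast hd
  have hgQ' : (1:ℤ) ≤ gQ := by exact_mod_cast hgQ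
  -- case split on gQ
  by_cases hQ1 : gQ = 1
  · subst hQ1
    have hRH' : (2 * g : ℤ) - 2 = T := by
      push_cast at hRH; linarith
    have hk1 : 1 ≤ k := by
      by_contra hk
      have hk0 : k = 0 := by omega
      subst hk0
      have : T = 0 := by simp [hT]
      have : (g:ℤ) ≥ 2 := by exact_mod_cast hg
      omega
    have hkd : (k : ℤ) * d ≤ 2 * ((2*g:ℤ) - 2) := by linarith
    have hk1' : (1:ℤ) ≤ k := by exact_mod_cast hk1
    have hbound : (d : ℤ) ≤ 4 * g - 4 := by nlinarith
    have hb : d ≤ 4 * g - 4 := by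
      have : (4*g - 4 : ℕ) = ((4 * (g:ℤ) - 4 : ℤ)).toNat := by omega
      omega
    refine ⟨hb, ?_, ?_⟩
    · intro hdeq
      have hdeq' : (d : ℤ) = 4 * g - 4 := by push_cast [hdeq]; omega
      refine ⟨rfl, ?_⟩
      have hk : k = 1 := by
        by_contra hk2
        have : 2 ≤ k := by omega
        have : (2:ℤ) ≤ k := by exact_mod_cast this
        nlinarith
      refine ⟨hk, fun i => ?_⟩
      -- sum is a single term
      subst hk
      have hi : i = 0 := Subsingleton.elim i 0
      subst hi
      have hTval : T = (s 0 : ℤ) * ((e 0 : ℤ) - 1) := by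
        simp [hT, Fin.sum_univ_one]
      have h2 : (s 0 : ℤ) * (e 0 : ℤ) = d := by exact_mod_cast hse 0
      have hs0 : (1:ℤ) ≤ s 0 := by exact_mod_cast hs 0
      have he0 : (2:ℤ) ≤ e 0 := by exact_mod_cast he 0
      -- 2g-2 = s0(e0-1), d = 4g-4, s0 e0 = d ⇒ 2 s0 e0 - 2 s0 = s0 e0 ⇒ e0 = 2
      have : (e 0 : ℤ) = 2 := by nlinarith
      exact_mod_cast this
    · rintro ⟨-, hk, he2⟩
      subst hk
      have hTval : T = (s 0 : ℤ) * ((e 0 : ℤ) - 1) := by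
        simp [hT, Fin.sum_univ_one]
      have h2 : s 0 * e 0 = d := hse 0
      rw [he2 0] at h2
      have hs0 : (s 0 : ℤ) = 2 * g - 2 := by
        rw [hTval] at hRH'
        have : ((e 0 : ℤ)) = 2 := by exact_mod_cast congrArg (Nat.cast : ℕ → ℤ) (he2 0)
        rw [this] at hRH'; linarith
      have : (d : ℤ) = 4 * g - 4 := by
        have : ((s 0 * 2 : ℕ) : ℤ) = d := by exact_mod_cast h2
        push_cast at this
        linarith
      omega
  · -- gQ ≥ 2 : strict bound, equality impossible
    have hQ2 : (2:ℤ) ≤ gQ := by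
      have : 2 ≤ gQ := by omega
      exact_mod_cast this
    have hRH2 : (2*g:ℤ) - 2 ≥ 2 * d := by nlinarith
    have hg' : (2:ℤ) ≤ g := by exact_mod_cast hg
    have hbound : (d:ℤ) ≤ 4 * g - 4 := by nlinarith
    constructor
    · omega
    · constructor
      · intro hdeq
        exfalso
        have : (d : ℤ) = 4 * g - 4 := by push_cast [hdeq]; omega
        nlinarith
      · rintro ⟨h1, -⟩
        exact absurd h1 hQ1
end
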